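/- For every integer b ≥ 2 there exists a coloring c : C↑_sur(b^ω) → ω such that for every h ∈ C↑_sur(b^ω), the set {f∘h : f ∈ C↑_sur(b^ω)} witnesses all colors: for every n ∈ ω there exists f with c(f∘h) = n. -/

import Mathlib

noncomputable section
open Classical

/-- Lexicographic strict order on `ℕ → Fin b`. -/
def lexLT (b : ℕ) (x y : ℕ → Fin b) : Prop :=
  ∃ n, (∀ m, m < n → x m = y m) ∧ x n < y n

/-- Lexicographic order `≤_lex` on `ℕ → Fin b`. -/
def lexLE (b : ℕ) (x y : ℕ → Fin b) : Prop := x = y ∨ lexLT b x y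

def IsGreatestLex (b : ℕ) (S : Set (ℕ → Fin b)) (x : ℕ → Fin b) : Prop :=
  x ∈ S ∧ ∀ y ∈ S, lexLE b y x

def IsLeastLex (b : ℕ) (S : Set (ℕ → Fin b)) (x : ℕ → Fin b) : Prop :=
  x ∈ S ∧ ∀ y ∈ S, lexLE b x y

/-- `S` is an interval for the lexicographic order. -/
def LexInterval (b : ℕ) (S : Set (ℕ → Fin b)) : Prop :=
  ∀ x ∈ S, ∀ y ∈ S, ∀ z, lexLE b x z → lexLE b z y → z ∈ S

/-- The basic clopen set of sequences extending the finite sequence `s`. -/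
def W (b : ℕ) (s : List (Fin b)) : Set (ℕ → Fin b) :=
  {x | ∀ i, (hi : i < s.length) → x i = s.get ⟨i, hi⟩}

/-- Continuous nondecreasing surjections of `b^ω`, i.e. members of `C↑_sur(b^ω)`. -/
def CSur (b : ℕ) (f : (ℕ → Fin b) → (ℕ → Fin b)) : Prop :=
  Continuous f ∧ Function.Surjective f ∧ ∀ x y, lexLE b x y → lexLE b (f x) (f y)

/-- A filtering on `b^ω`. -/
def Filtering (b : ℕ) (U : List (Fin b) → Set (ℕ → Fin b)) : Prop :=
  (∀ s, (U s).Nonempty ∧ IsClopen (U s) ∧ LexInterval b (U s)) ∧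
  U [] = Set.univ ∧
  (∀ s, U s = ⋃ i : Fin b, U (s ++ [i])) ∧
  (∀ s, ∀ i j : Fin b, i ≠ j → Disjoint (U (s ++ [i])) (U (s ++ [j]))) ∧
  (∀ s, ∀ i j : Fin b, i < j → ∀ x y,
    IsGreatestLex b (U (s ++ [i])) x → IsGreatestLex b (U (s ++ [j])) y → lexLT b x y)

/-- `A_b`: sequences eventually equal to `b-1` (the top of `Fin b`), except the constant
top sequence (the lexicographic maximum of `b^ω`). -/
def AbSet (b : ℕ) : Set (ℕ → Fin b) :=
  {x | (∃ N, ∀ n, N ≤ n → ∀ j : Fin b, j ≤ x n) ∧ ¬ ∀ n, ∀ j : Fin b, j ≤ x n}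

/-- `Y` is order isomorphic to `ℚ` with respect to the lexicographic order. -/
def OrderIsoQ (b : ℕ) (Y : Set (ℕ → Fin b)) : Prop :=
  ∃ e : ℚ ≃ Y, ∀ p q : ℚ, p ≤ q ↔ lexLE b (e p).1 (e q).1

/-- `Y_f = {max f⁻¹(W_s) : s ∈ b^{<ω}} \ {max b^ω}`. -/
def Yset (b : ℕ) (f : (ℕ → Fin b) → (ℕ → Fin b)) : Set (ℕ → Fin b) :=
  {x | (∃ s : List (Fin b), IsGreatestLex b (f ⁻¹' W b s) x) ∧ ¬ ∀ n, ∀ j : Fin b, j ≤ x n}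

/-- The metric `ρ_b` on `b^ω`. -/
def rhoB (b : ℕ) (x y : ℕ → Fin b) : ℝ :=
  if h : x = y then 0 else (2 : ℝ) ^ (-(Nat.find (Function.ne_iff.mp h) : ℤ))

/-- The sup-metric `ρ_∞` on `C↑_sur(b^ω)`. -/
def rhoInf (b : ℕ) (f g : (ℕ → Fin b) → (ℕ → Fin b)) : ℝ :=
  ⨆ x, rhoB b (f x) (g x)

/-- `⌊log₂(1/ε)⌋ + 1`. -/
def kOf (ε : ℝ) : ℕ := ⌊Real.logb 2 (1 / ε)⌋₊ + 1

/-- The `l`-th odd tangent number `t_l = tan^{(2l-1)}(0)`. -/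
def oddTangent (l : ℕ) : ℝ := iteratedDeriv (2 * l - 1) Real.tan 0

/-- The lexicographically increasing enumeration of `b^k`: `sEnum b k hb i` is the
`i`-th element of `b^k` in lexicographic order (base-`b` digits, most significant first). -/
def sEnum (b k : ℕ) (hb : 0 < b) (i : ℕ) : List (Fin b) :=
  List.ofFn fun j : Fin k => (⟨i / b ^ (k - 1 - (j : ℕ)) % b, Nat.mod_lt _ hb⟩ : Fin b)

end

noncomputable section
open Classical

namespace OscAux

def zeroF (b : ℕ) (hb : 2 ≤ b) : Fin b := ⟨0, by omega⟩
def oneF (b : ℕ) (hb : 2 ≤ b) : Fin b := ⟨1, by omega⟩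
def lastF (b : ℕ) (hb : 2 ≤ b) : Fin b := ⟨b - 1, by omega⟩
def botF (b : ℕ) (hb : 2 ≤ b) : ℕ → Fin b := fun _ => zeroF b hb
def topF (b : ℕ) (hb : 2 ≤ b) : ℕ → Fin b := fun _ => lastF b hb
def vF (b : ℕ) (hb : 2 ≤ b) (n : ℕ) : ℕ → Fin b :=
  fun i => if i = n then oneF b hb else zeroF b hb

variable {b : ℕ}

theorem firstDiff {x y : ℕ → Fin b} (h : x ≠ y) :
    ∃ j, (∀ i, i < j → x i = y i) ∧ x j ≠ y j := by
  have h' : ∃ j, x j ≠ y j := Function.ne_iff.mp h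
  exact ⟨Nat.find h', fun i hi => not_not.mp (Nat.find_min h' hi), Nat.find_spec h'⟩

theorem lexLT_trans {x y z : ℕ → Fin b} (h1 : lexLT b x y) (h2 : lexLT b y z) :
    lexLT b x z := by
  obtain ⟨j1, ha1, hl1⟩ := h1
  obtain ⟨j2, ha2, hl2⟩ := h2
  rcases lt_trichotomy j1 j2 with h | h | h
  · exact ⟨j1, fun i hi => (ha1 i hi).trans (ha2 i (hi.trans h)),
      by rw [← ha2 j1 h]; exact hl1⟩
  · subst h
    exact ⟨j1, fun i hi => (ha1 i hi).trans (ha2 i hi), lt_trans hl1 hl2⟩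
  · exact ⟨j2, fun i hi => (ha1 i (hi.trans h)).trans (ha2 i hi),
      by rw [ha1 j2 h]; exact hl2⟩

theorem lexLE_trans {x y z : ℕ → Fin b} (h1 : lexLE b x y) (h2 : lexLE b y z) :
    lexLE b x z := by
  rcases h1 with rfl | h1
  · exact h2
  rcases h2 with rfl | h2
  · exact Or.inr h1
  exact Or.inr (lexLT_trans h1 h2)

theorem lexLT_asymm {x y : ℕ → Fin b} (h1 : lexLT b x y) (h2 : lexLT b y x) : False := by
  obtain ⟨j1, ha1, hl1⟩ := h1
  obtain ⟨j2, ha2, hl2⟩ := h2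
  rcases lt_trichotomy j1 j2 with h | h | h
  · rw [ha2 j1 h] at hl1; exact lt_irrefl _ hl1
  · subst h; exact lt_irrefl _ (lt_trans hl1 hl2)
  · rw [ha1 j2 h] at hl2; exact lt_irrefl _ hl2

theorem lexLE_antisymm {x y : ℕ → Fin b} (h1 : lexLE b x y) (h2 : lexLE b y x) : x = y := by
  rcases h1 with rfl | h1
  · rfl
  rcases h2 with rfl | h2
  · rfl
  exact absurd h2 (fun hc => lexLT_asymm h1 hc)

theorem bot_le (hb : 2 ≤ b) (x : ℕ → Fin b) : lexLE b (botF b hb) x := by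
  by_cases h : botF b hb = x
  · exact Or.inl h
  · obtain ⟨j, ha, hne⟩ := firstDiff h
    refine Or.inr ⟨j, ha, ?_⟩
    have hv : (x j).val ≠ 0 := by
      intro hc
      exact hne (Fin.ext (by simp [botF, zeroF, hc]))
    rw [Fin.lt_def]
    simp only [botF, zeroF]
    omega

theorem le_top (hb : 2 ≤ b) (x : ℕ → Fin b) : lexLE b x (topF b hb) := by
  by_cases h : x = topF b hb
  · exact Or.inl h
  · obtain ⟨j, ha, hne⟩ := firstDiff h
    refine Or.inr ⟨j, ha, ?_⟩
    have h1 : (x j).val < b := (x j).isLt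
    have hv : (x j).val ≠ b - 1 := by
      intro hc
      exact hne (Fin.ext (by simp [topF, lastF, hc]))
    rw [Fin.lt_def]
    simp only [topF, lastF]
    omega

theorem CSur_map_bot (hb : 2 ≤ b) {f : (ℕ → Fin b) → (ℕ → Fin b)} (hf : CSur b f) :
    f (botF b hb) = botF b hb := by
  obtain ⟨x, hx⟩ := hf.2.1 (botF b hb)
  have h1 := hf.2.2 _ _ (bot_le hb x)
  rw [hx] at h1
  exact lexLE_antisymm h1 (bot_le hb _)

theorem CSur_map_top (hb : 2 ≤ b) {f : (ℕ → Fin b) → (ℕ → Fin b)} (hf : CSur b f) :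
    f (topF b hb) = topF b hb := by
  obtain ⟨x, hx⟩ := hf.2.1 (topF b hb)
  have h1 := hf.2.2 _ _ (le_top hb x)
  rw [hx] at h1
  exact lexLE_antisymm (le_top hb _) h1

theorem v_ne_bot (hb : 2 ≤ b) (n : ℕ) : vF b hb n ≠ botF b hb := by
  intro h
  have := congrFun h n
  simp [vF, botF, oneF, zeroF] at this

theorem v_ne_top (hb : 2 ≤ b) (n : ℕ) : vF b hb n ≠ topF b hb := by
  intro h
  have := congrFun h (n + 1)
  simp [vF, topF, zeroF, lastF] at this
  omega


def NKd (b : ℕ) : ℕ → (ℕ → Fin b) → ℕ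
  | 0, _ => 0
  | K + 1, x => NKd b K x * b + (x K).val

theorem NKd_lt (K : ℕ) (x : ℕ → Fin b) : NKd b K x < b ^ K := by
  induction K with
  | zero => simp [NKd]
  | succ K ih =>
    have h2 : (x K).val < b := (x K).isLt
    have h3 : (NKd b K x + 1) * b ≤ b ^ K * b := Nat.mul_le_mul_right b (Nat.succ_le_of_lt ih)
    rw [add_mul, one_mul] at h3
    simp only [NKd, pow_succ]
    omega

theorem NKd_congr {x y : ℕ → Fin b} (K : ℕ) (h : ∀ i, i < K → x i = y i) :
    NKd b K x = NKd b K y := by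
  induction K with
  | zero => rfl
  | succ K ih =>
    simp only [NKd]
    rw [ih (fun i hi => h i (by omega)), h K (by omega)]

theorem NKd_lt_of_lt {x y : ℕ → Fin b} {j K : ℕ} (hK : j < K)
    (ha : ∀ i, i < j → x i = y i) (hj : (x j).val < (y j).val) :
    NKd b K x < NKd b K y := by
  induction K with
  | zero => omega
  | succ K ih =>
    simp only [NKd]
    rcases Nat.lt_succ_iff_lt_or_eq.mp hK with h | h
    · have h1 := ih h
      have h2 : (x K).val < b := (x K).isLt
      have h3 : (NKd b K x + 1) * b ≤ NKd b K y * b := Nat.mul_le_mul_right b h1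
      rw [add_mul, one_mul] at h3
      omega
    · subst h
      rw [NKd_congr j ha]
      omega

theorem NKd_inj {x y : ℕ → Fin b} {K : ℕ} (h : NKd b K x = NKd b K y) :
    ∀ i, i < K → x i = y i := by
  by_contra hc
  push_neg at hc
  obtain ⟨i0, hi0, hne0⟩ := hc
  have hex : ∃ i, i < K ∧ x i ≠ y i := ⟨i0, hi0, hne0⟩
  have hspec := Nat.find_spec hex
  have ha : ∀ i, i < Nat.find hex → x i = y i := by
    intro i hi
    by_contra hne'
    exact Nat.find_min hex hi ⟨by omega, hne'⟩
  rcases lt_trichotomy (x (Nat.find hex)).val (y (Nat.find hex)).val with h' | h' | h'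
  · exact absurd h (Nat.ne_of_lt (NKd_lt_of_lt hspec.1 ha h'))
  · exact hspec.2 (Fin.ext h')
  · exact absurd h.symm (Nat.ne_of_lt (NKd_lt_of_lt hspec.1 (fun i hi => (ha i hi).symm) h'))

theorem NKd_le_of_lexLE {x y : ℕ → Fin b} (K : ℕ) (h : lexLE b x y) :
    NKd b K x ≤ NKd b K y := by
  rcases h with rfl | ⟨j, ha, hj⟩
  · exact le_refl _
  by_cases hK : j < K
  · exact le_of_lt (NKd_lt_of_lt hK ha (Fin.lt_def.mp hj))
  · exact le_of_eq (NKd_congr K fun i hi => ha i (by omega))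

theorem NKd_bot (hb : 2 ≤ b) (K : ℕ) : NKd b K (botF b hb) = 0 := by
  induction K with
  | zero => rfl
  | succ K ih => simp [NKd, ih, botF, zeroF]

theorem NKd_top (hb : 2 ≤ b) (K : ℕ) : NKd b K (topF b hb) = b ^ K - 1 := by
  induction K with
  | zero => simp [NKd]
  | succ K ih =>
    have h1 : 1 ≤ b ^ K := Nat.one_le_pow _ _ (by omega)
    have h2 : b ≤ b ^ K * b := by
      calc b = 1 * b := (one_mul b).symm
        _ ≤ b ^ K * b := Nat.mul_le_mul_right b h1
    simp only [NKd, ih, topF, lastF]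
    rw [Nat.sub_one_mul, pow_succ]
    omega

theorem NKd_surj (hb : 2 ≤ b) : ∀ (K M : ℕ) (t : ℕ → Fin b), M < b ^ K →
    ∃ x : ℕ → Fin b, NKd b K x = M ∧ ∀ i, x (K + i) = t i := by
  intro K
  induction K with
  | zero =>
    intro M t hM
    rw [pow_zero] at hM
    have hM0 : M = 0 := Nat.lt_one_iff.mp hM
    subst hM0
    exact ⟨t, rfl, fun i => by rw [Nat.zero_add]⟩
  | succ K ih =>
    intro M t hM
    have hb0 : 0 < b := by omega
    have hq : M / b < b ^ K := Nat.div_lt_of_lt_mul (by rw [Nat.mul_comm, ← pow_succ]; exact hM)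
    obtain ⟨x, hx1, hx2⟩ := ih (M / b)
      (fun i => if i = 0 then ⟨M % b, Nat.mod_lt M hb0⟩ else t (i - 1)) hq
    refine ⟨x, ?_, ?_⟩
    · have hxK : x K = (⟨M % b, Nat.mod_lt M hb0⟩ : Fin b) := by
        have := hx2 0
        simpa using this
      simp only [NKd, hx1, hxK]
      show M / b * b + M % b = M
      rw [Nat.mul_comm]
      exact Nat.div_add_mod M b
    · intro i
      have h' := hx2 (1 + i)
      rw [if_neg (by omega), show 1 + i - 1 = i by omega] at h'
      rw [show K + 1 + i = K + (1 + i) by omega]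
      exact h'

theorem lowzero_lt_v (hb : 2 ≤ b) (n : ℕ) {w : ℕ → Fin b}
    (hw : ∀ i, i < n + 1 → w i = zeroF b hb) : lexLT b w (vF b hb n) := by
  refine ⟨n, fun m hm => ?_, ?_⟩
  · rw [hw m (by omega)]
    simp [vF, Nat.ne_of_lt hm]
  · rw [hw n (by omega)]
    show zeroF b hb < vF b hb n n
    simp only [vF, if_pos rfl]
    rw [Fin.lt_def]
    simp [zeroF, oneF]

theorem le_of_agree_tailzero (hb : 2 ≤ b) {w z : ℕ → Fin b} (M : ℕ)
    (h1 : ∀ i, i < M → w i = z i) (h2 : ∀ i, M ≤ i → w i = zeroF b hb) :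
    lexLE b w z := by
  by_cases h : w = z
  · exact Or.inl h
  · obtain ⟨j, ha, hne⟩ := firstDiff h
    have hjM : M ≤ j := by
      by_contra hc
      exact hne (h1 j (by omega))
    refine Or.inr ⟨j, ha, ?_⟩
    rw [h2 j hjM] at hne ⊢
    have hv : (z j).val ≠ 0 := by
      intro hc
      exact hne (Fin.ext (by simp [zeroF, hc]))
    rw [Fin.lt_def]
    simp only [zeroF]
    omega

theorem v_le_of_not_lowzero (hb : 2 ≤ b) (n : ℕ) {z : ℕ → Fin b}
    (hz : ¬ ∀ j, j < n + 1 → z j = zeroF b hb) : lexLE b (vF b hb n) z := by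
  push_neg at hz
  obtain ⟨j0', hj0', hne'⟩ := hz
  have hex : ∃ j, j < n + 1 ∧ z j ≠ zeroF b hb := ⟨j0', hj0', hne'⟩
  have hspec := Nat.find_spec hex
  set j0 := Nat.find hex with hj0def
  have hzag : ∀ i, i < j0 → z i = zeroF b hb := by
    intro i hi
    by_contra hc
    exact Nat.find_min hex hi ⟨by omega, hc⟩
  have hzpos : 0 < (z j0).val := by
    rcases Nat.eq_zero_or_pos (z j0).val with h | h
    · exact absurd (Fin.ext (by simp [zeroF, h]) : z j0 = zeroF b hb) hspec.2
    · exact h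
  rcases Nat.lt_or_ge j0 n with hlt | hge
  · refine Or.inr ⟨j0, fun m hm => ?_, ?_⟩
    · rw [hzag m hm]
      simp [vF, show m ≠ n by omega]
    · have : vF b hb n j0 = zeroF b hb := by simp [vF, show j0 ≠ n by omega]
      rw [this, Fin.lt_def]
      simp only [zeroF]
      omega
  · have hj0n : j0 = n := by omega
    by_cases h1 : (z n).val = 1
    · refine le_of_agree_tailzero hb (n + 1) (fun i hi => ?_) (fun i hi => ?_)
      · rcases Nat.lt_or_ge i n with h' | h'
        · rw [hzag i (by omega)]
          simp [vF, show i ≠ n by omega]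
        · have hin : i = n := by omega
          subst hin
          simp only [vF, if_pos rfl]
          exact Fin.ext (by simp [oneF]; omega)
      · simp [vF, show i ≠ n by omega]
    · refine Or.inr ⟨n, fun m hm => ?_, ?_⟩
      · rw [hzag m (by omega)]
        simp [vF, show m ≠ n by omega]
      · have hv : vF b hb n n = oneF b hb := by simp [vF]
        rw [hv, Fin.lt_def]
        have hzn : 0 < (z n).val := by rw [← hj0n]; exact hzpos
        show 1 < (z n).val
        omega

def fF (b : ℕ) (hb : 2 ≤ b) (K n m : ℕ) (x : ℕ → Fin b) : ℕ → Fin b :=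
  if NKd b K x < m - 1 then botF b hb
  else if NKd b K x = m - 1 then fun i => if i < n + 1 then zeroF b hb else x (i - (n + 1) + K)
  else if NKd b K x = m then vF b hb n
  else if NKd b K x = m + 1 then
    (if ∀ j, j < n + 1 → x (K + j) = zeroF b hb then vF b hb n else fun i => x (K + i))
  else topF b hb

variable (hb : 2 ≤ b) (K n m : ℕ)

theorem fF_eq_bot {x : ℕ → Fin b} (h : NKd b K x < m - 1) :
    fF b hb K n m x = botF b hb := by rw [fF, if_pos h]

theorem fF_eq_p2 {x : ℕ → Fin b} (h : NKd b K x = m - 1) :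
    fF b hb K n m x = fun i => if i < n + 1 then zeroF b hb else x (i - (n + 1) + K) := by
  rw [fF, if_neg (by omega), if_pos h]

theorem fF_eq_v {x : ℕ → Fin b} (hm1 : 1 ≤ m) (h : NKd b K x = m) :
    fF b hb K n m x = vF b hb n := by
  rw [fF, if_neg (by omega), if_neg (by omega), if_pos h]

theorem fF_eq_p5 {x : ℕ → Fin b} (hm1 : 1 ≤ m) (h : NKd b K x = m + 1) :
    fF b hb K n m x =
      (if ∀ j, j < n + 1 → x (K + j) = zeroF b hb then vF b hb n else fun i => x (K + i)) := by
  rw [fF, if_neg (by omega), if_neg (by omega), if_neg (by omega), if_pos h]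

theorem fF_eq_top {x : ℕ → Fin b} (hm1 : 1 ≤ m) (h : m + 1 < NKd b K x) :
    fF b hb K n m x = topF b hb := by
  rw [fF, if_neg (by omega), if_neg (by omega), if_neg (by omega), if_neg (by omega)]

theorem v_le_fF (hm1 : 1 ≤ m) {y : ℕ → Fin b} (hy : m ≤ NKd b K y) :
    lexLE b (vF b hb n) (fF b hb K n m y) := by
  rcases eq_or_lt_of_le hy with h | h
  · rw [fF_eq_v hb K n m hm1 h.symm]
    exact Or.inl rfl
  rcases eq_or_lt_of_le (Nat.succ_le_of_lt h) with h' | h'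
  · rw [fF_eq_p5 hb K n m hm1 h'.symm]
    by_cases hP : ∀ j, j < n + 1 → y (K + j) = zeroF b hb
    · rw [if_pos hP]
      exact Or.inl rfl
    · rw [if_neg hP]
      exact v_le_of_not_lowzero hb n (by simpa using hP)
  · rw [fF_eq_top hb K n m hm1 h']
    exact le_top hb _

theorem fF_mono (hm1 : 1 ≤ m) {x y : ℕ → Fin b} (hxy : lexLE b x y) :
    lexLE b (fF b hb K n m x) (fF b hb K n m y) := by
  have hN : NKd b K x ≤ NKd b K y := NKd_le_of_lexLE K hxy
  by_cases h1x : NKd b K x < m - 1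
  · rw [fF_eq_bot hb K n m h1x]
    exact bot_le hb _
  by_cases h2x : NKd b K x = m - 1
  · by_cases h2y : NKd b K y = m - 1
    · rcases hxy with rfl | ⟨j, ha, hj⟩
      · exact Or.inl rfl
      · have hpre : ∀ i, i < K → x i = y i := NKd_inj (h2x.trans h2y.symm)
        have hjK : K ≤ j := by
          by_contra hc
          exact absurd (hpre j (by omega)) (Fin.ne_of_lt hj)
        rw [fF_eq_p2 hb K n m h2x, fF_eq_p2 hb K n m h2y]
        refine Or.inr ⟨j - K + (n + 1), fun i hi => ?_, ?_⟩
        · by_cases hi' : i < n + 1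
          · simp [hi']
          · simp only [if_neg hi']
            exact ha (i - (n + 1) + K) (by omega)
        · have hni : ¬ (j - K + (n + 1) < n + 1) := by omega
          simp only [if_neg hni]
          rw [show j - K + (n + 1) - (n + 1) + K = j by omega]
          exact hj
    · have hy : m ≤ NKd b K y := by omega
      refine lexLE_trans (Or.inr ?_) (v_le_fF hb K n m hm1 hy)
      rw [fF_eq_p2 hb K n m h2x]
      exact lowzero_lt_v hb n (fun i hi => by simp [hi])
  by_cases h3x : NKd b K x = m
  · rw [fF_eq_v hb K n m hm1 h3x]
    exact v_le_fF hb K n m hm1 (by omega)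
  by_cases h4x : NKd b K x = m + 1
  · by_cases h4y : NKd b K y = m + 1
    · rcases hxy with rfl | ⟨j, ha, hj⟩
      · exact Or.inl rfl
      have hpre : ∀ i, i < K → x i = y i := NKd_inj (h4x.trans h4y.symm)
      have hjK : K ≤ j := by
        by_contra hc
        exact absurd (hpre j (by omega)) (Fin.ne_of_lt hj)
      rw [fF_eq_p5 hb K n m hm1 h4x, fF_eq_p5 hb K n m hm1 h4y]
      by_cases hPx : ∀ j', j' < n + 1 → x (K + j') = zeroF b hb
      · rw [if_pos hPx]
        by_cases hPy : ∀ j', j' < n + 1 → y (K + j') = zeroF b hb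
        · rw [if_pos hPy]
          exact Or.inl rfl
        · rw [if_neg hPy]
          exact v_le_of_not_lowzero hb n (by simpa using hPy)
      · by_cases hPy : ∀ j', j' < n + 1 → y (K + j') = zeroF b hb
        · exfalso
          push_neg at hPx
          obtain ⟨j0, hj0, hne0⟩ := hPx
          by_cases hjc : j < K + (n + 1)
          · have hyj : y j = zeroF b hb := by
              have := hPy (j - K) (by omega)
              rw [show K + (j - K) = j by omega] at this
              exact this
            have hval := Fin.lt_def.mp hj
            rw [hyj] at hval
            simp only [zeroF] at hval
            omega
          · have heq : x (K + j0) = y (K + j0) := ha _ (by omega)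
            rw [hPy j0 hj0] at heq
            exact hne0 heq
        · rw [if_neg hPx, if_neg hPy]
          refine Or.inr ⟨j - K, fun i hi => ha (K + i) (by omega), ?_⟩
          show x (K + (j - K)) < y (K + (j - K))
          rw [show K + (j - K) = j by omega]
          exact hj
    · have h5y : m + 1 < NKd b K y := by omega
      rw [fF_eq_top hb K n m hm1 h5y]
      exact le_top hb _
  · have h5x : m + 1 < NKd b K x := by omega
    rw [fF_eq_top hb K n m hm1 h5x, fF_eq_top hb K n m hm1 (by omega)]
    exact Or.inl rfl

theorem fF_surj (hm1 : 1 ≤ m) (hm2 : m + 2 ≤ b ^ K) :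
    Function.Surjective (fF b hb K n m) := by
  intro z
  by_cases hz : ∀ j, j < n + 1 → z j = zeroF b hb
  · obtain ⟨x, hx1, hx2⟩ := NKd_surj hb K (m - 1) (fun i => z (n + 1 + i)) (by omega)
    refine ⟨x, ?_⟩
    rw [fF_eq_p2 hb K n m hx1]
    funext i
    by_cases hi : i < n + 1
    · rw [if_pos hi, hz i hi]
    · rw [if_neg hi]
      rw [show i - (n + 1) + K = K + (i - (n + 1)) by omega, hx2 (i - (n + 1)),
        show n + 1 + (i - (n + 1)) = i by omega]
  · obtain ⟨x, hx1, hx2⟩ := NKd_surj hb K (m + 1) z (by omega)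
    refine ⟨x, ?_⟩
    rw [fF_eq_p5 hb K n m hm1 hx1, if_neg ?_]
    · funext i
      exact hx2 i
    · intro hc
      apply hz
      intro j hj
      rw [← hx2 j]
      exact hc j hj

theorem fF_coord (hm1 : 1 ≤ m) (i : ℕ) {x y : ℕ → Fin b}
    (h : ∀ j, j < K + (n + 1) + (i + K + 1) → x j = y j) :
    fF b hb K n m x i = fF b hb K n m y i := by
  have hN : NKd b K x = NKd b K y := NKd_congr K (fun j hj => h j (by omega))
  by_cases h1 : NKd b K x < m - 1
  · rw [fF_eq_bot hb K n m h1, fF_eq_bot hb K n m (by omega)]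
  by_cases h2 : NKd b K x = m - 1
  · rw [fF_eq_p2 hb K n m h2, fF_eq_p2 hb K n m (by omega)]
    by_cases hi : i < n + 1
    · simp [hi]
    · simp only [if_neg hi]
      exact h (i - (n + 1) + K) (by omega)
  by_cases h3 : NKd b K x = m
  · rw [fF_eq_v hb K n m hm1 h3, fF_eq_v hb K n m hm1 (by omega)]
  by_cases h4 : NKd b K x = m + 1
  · rw [fF_eq_p5 hb K n m hm1 h4, fF_eq_p5 hb K n m hm1 (by omega)]
    have hcond : (∀ j, j < n + 1 → x (K + j) = zeroF b hb) ↔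
        (∀ j, j < n + 1 → y (K + j) = zeroF b hb) := by
      constructor
      · intro hc j hj
        rw [← h (K + j) (by omega)]
        exact hc j hj
      · intro hc j hj
        rw [h (K + j) (by omega)]
        exact hc j hj
    by_cases hP : ∀ j, j < n + 1 → y (K + j) = zeroF b hb
    · rw [if_pos (hcond.mpr hP), if_pos hP]
    · rw [if_neg (fun hc => hP (hcond.mp hc)), if_neg hP]
      exact h (K + i) (by omega)
  · rw [fF_eq_top hb K n m hm1 (by omega), fF_eq_top hb K n m hm1 (by omega)]

theorem fF_continuous (hm1 : 1 ≤ m) : Continuous (fF b hb K n m) := by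
  refine continuous_pi fun i => ?_
  set M := K + (n + 1) + (i + K + 1) with hM
  have key : (fun x : ℕ → Fin b => fF b hb K n m x i) =
      (fun u : Fin M → Fin b =>
        fF b hb K n m (fun j => if hj : j < M then u ⟨j, hj⟩ else zeroF b hb) i) ∘
      (fun x : ℕ → Fin b => fun j : Fin M => x j) := by
    funext x
    exact fF_coord hb K n m hm1 i (fun j hj => by simp [hj]; intro hc; omega)
  rw [key]
  have hd : DiscreteTopology (Fin M → Fin b) := Pi.discreteTopology
  exact (continuous_of_discreteTopology).comp
    (continuous_pi fun j : Fin M => continuous_apply (j : ℕ))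

theorem exists_good_f (hb' : 2 ≤ b) (n' : ℕ) (p : ℕ → Fin b)
    (hp0 : p ≠ botF b hb') (hp1 : p ≠ topF b hb') :
    ∃ f, CSur b f ∧ f p = vF b hb' n' := by
  obtain ⟨i0, hi0⟩ := Function.ne_iff.mp hp0
  obtain ⟨i1, hi1⟩ := Function.ne_iff.mp hp1
  set K' := max i0 i1 + 1 with hK'
  have hi0K : i0 < K' := by
    have := le_max_left i0 i1
    omega
  have hi1K : i1 < K' := by
    have := le_max_right i0 i1
    omega
  set m' := NKd b K' p with hm'
  have hm1 : 1 ≤ m' := by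
    rcases Nat.eq_zero_or_pos m' with h | h
    · exfalso
      have heq : NKd b K' p = NKd b K' (botF b hb') := by rw [NKd_bot hb' K']; exact h
      exact hi0 (NKd_inj heq i0 hi0K)
    · exact h
  have hm2 : m' + 2 ≤ b ^ K' := by
    have hex : ∃ i, p i ≠ topF b hb' i := Function.ne_iff.mp hp1
    have hjs : p (Nat.find hex) ≠ topF b hb' (Nat.find hex) := Nat.find_spec hex
    have hja : ∀ i, i < Nat.find hex → p i = topF b hb' i :=
      fun i hi => not_not.mp (Nat.find_min hex hi)
    have hjK : Nat.find hex < K' := by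
      have := Nat.find_min' hex hi1
      omega
    have hlt : (p (Nat.find hex)).val < (topF b hb' (Nat.find hex)).val := by
      have h1 : (p (Nat.find hex)).val < b := (p (Nat.find hex)).isLt
      have h2 : (p (Nat.find hex)).val ≠ b - 1 := by
        intro hc
        exact hjs (Fin.ext (by rw [hc]; rfl))
      show (p (Nat.find hex)).val < b - 1
      omega
    have hlt2 := NKd_lt_of_lt hjK hja hlt
    rw [NKd_top hb' K'] at hlt2
    have hbK : b ≤ b ^ K' := Nat.le_self_pow (by omega) b
    omega
  refine ⟨fF b hb' K' n' m', ⟨fF_continuous hb' K' n' m' hm1, fF_surj hb' K' n' m' hm1 hm2,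
    fun x y hxy => fF_mono hb' K' n' m' hm1 hxy⟩, ?_⟩
  exact fF_eq_v hb' K' n' m' hm1 rfl

def decList (b : ℕ) (k : ℕ) : List (Fin b) := (Encodable.decode (α := List (Fin b)) k).getD []

def aSeq (b : ℕ) (hb : 2 ≤ b) (k : ℕ) : ℕ → Fin b := fun i => (decList b k).getD i (zeroF b hb)

theorem aSeq_trunc (hb' : 2 ≤ b) (x : ℕ → Fin b) (L : ℕ) :
    ∃ k, aSeq b hb' k = fun i => if i < L then x i else zeroF b hb' := by
  refine ⟨Encodable.encode (List.ofFn fun j : Fin L => x j), ?_⟩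
  funext i
  have hdec : decList b (Encodable.encode (List.ofFn fun j : Fin L => x j)) =
      List.ofFn fun j : Fin L => x j := by
    rw [decList, Encodable.encodek]
    rfl
  rw [aSeq, hdec]
  by_cases hi : i < L
  · rw [List.getD_eq_getElem _ _ (by simpa using hi), List.getElem_ofFn, if_pos hi]
  · rw [List.getD_eq_default _ _ (by simpa using hi), if_neg hi]

theorem exists_middle (hb' : 2 ≤ b) {h : (ℕ → Fin b) → (ℕ → Fin b)} (hh : CSur b h) :
    ∃ k, h (aSeq b hb' k) ≠ botF b hb' ∧ h (aSeq b hb' k) ≠ topF b hb' := by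
  obtain ⟨x, hx⟩ := hh.2.1 (vF b hb' 0)
  have hU : IsOpen {z : ℕ → Fin b | h z ≠ botF b hb' ∧ h z ≠ topF b hb'} := by
    have hset : {z : ℕ → Fin b | h z ≠ botF b hb' ∧ h z ≠ topF b hb'}
        = h ⁻¹' ({botF b hb'}ᶜ ∩ {topF b hb'}ᶜ) := by
      ext z
      simp [Set.mem_preimage]
    rw [hset]
    exact hh.1.isOpen_preimage _
      ((isClosed_singleton.isOpen_compl).inter isClosed_singleton.isOpen_compl)
  have hxU : x ∈ {z : ℕ → Fin b | h z ≠ botF b hb' ∧ h z ≠ topF b hb'} := by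
    refine ⟨?_, ?_⟩
    · rw [hx]; exact v_ne_bot hb' 0
    · rw [hx]; exact v_ne_top hb' 0
  have htd : Filter.Tendsto (fun L : ℕ => fun i => if i < L then x i else zeroF b hb')
      Filter.atTop (nhds x) := by
    rw [tendsto_pi_nhds]
    intro i
    refine Filter.Tendsto.congr' ?_ (tendsto_const_nhds (x := x i))
    filter_upwards [Filter.eventually_ge_atTop (i + 1)] with L hL
    simp [show i < L by omega]
  have hev := htd.eventually (hU.eventually_mem hxU)
  obtain ⟨L, hL⟩ := hev.exists
  obtain ⟨k, hk⟩ := aSeq_trunc hb' x L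
  exact ⟨k, by rw [hk]; exact hL⟩

end OscAux

end

/-- exact oscillation stability fails: there is a coloring of
`C↑_sur(b^ω)` into `ω` colors such that `{f ∘ h : f ∈ C↑_sur(b^ω)}` witnesses all
colors for every `h ∈ C↑_sur(b^ω)`. -/
theorem exact_oscillation_fails (b : ℕ) (hb : 2 ≤ b) :
    ∃ c : ((ℕ → Fin b) → (ℕ → Fin b)) → ℕ,
      ∀ h, CSur b h → ∀ n : ℕ, ∃ f, CSur b f ∧ c (f ∘ h) = n := by 
  classical
  refine ⟨fun g =>
    if H : ∃ k, g (OscAux.aSeq b hb k) ≠ OscAux.botF b hb ∧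
        g (OscAux.aSeq b hb k) ≠ OscAux.topF b hb then
      (if H2 : ∃ i, g (OscAux.aSeq b hb (Nat.find H)) i ≠ OscAux.zeroF b hb then
        Nat.find H2 else 0)
    else 0, ?_⟩
  intro h hh n
  have Hh := OscAux.exists_middle hb hh
  obtain ⟨hp0, hp1⟩ := Nat.find_spec Hh
  obtain ⟨f, hf, hfp⟩ := OscAux.exists_good_f hb n (h (OscAux.aSeq b hb (Nat.find Hh))) hp0 hp1
  refine ⟨f, hf, ?_⟩
  have hk0 : ∀ j, j < Nat.find Hh →
      (f ∘ h) (OscAux.aSeq b hb j) = OscAux.botF b hb ∨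
      (f ∘ h) (OscAux.aSeq b hb j) = OscAux.topF b hb := by
    intro j hj
    have hjprop := Nat.find_min Hh hj
    rw [not_and_or, not_not, not_not] at hjprop
    rcases hjprop with hcase | hcase
    · left
      rw [Function.comp_apply, hcase]
      exact OscAux.CSur_map_bot hb hf
    · right
      rw [Function.comp_apply, hcase]
      exact OscAux.CSur_map_top hb hf
  have hcompk : (f ∘ h) (OscAux.aSeq b hb (Nat.find Hh)) = OscAux.vF b hb n := by
    rw [Function.comp_apply, hfp]
  have Hg : ∃ k, (f ∘ h) (OscAux.aSeq b hb k) ≠ OscAux.botF b hb ∧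
      (f ∘ h) (OscAux.aSeq b hb k) ≠ OscAux.topF b hb := by
    refine ⟨Nat.find Hh, ?_, ?_⟩
    · rw [hcompk]; exact OscAux.v_ne_bot hb n
    · rw [hcompk]; exact OscAux.v_ne_top hb n
  beta_reduce
  rw [dif_pos Hg]
  have hfind : Nat.find Hg = Nat.find Hh := by
    rw [Nat.find_eq_iff]
    constructor
    · constructor
      · rw [hcompk]; exact OscAux.v_ne_bot hb n
      · rw [hcompk]; exact OscAux.v_ne_top hb n
    · intro j hj hc
      rcases hk0 j hj with hcase | hcase
      · exact hc.1 hcase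
      · exact hc.2 hcase
  have H2 : ∃ i, (f ∘ h) (OscAux.aSeq b hb (Nat.find Hg)) i ≠ OscAux.zeroF b hb := by
    rw [hfind, hcompk]
    refine ⟨n, ?_⟩
    simp only [OscAux.vF, if_pos rfl]
    intro hc
    have := congrArg Fin.val hc
    simp [OscAux.oneF, OscAux.zeroF] at this
  rw [dif_pos H2]
  rw [Nat.find_eq_iff]
  constructor
  · rw [hfind, hcompk]
    simp only [OscAux.vF, if_pos rfl]
    intro hc
    have := congrArg Fin.val hc
    simp [OscAux.oneF, OscAux.zeroF] at this
  · intro j hj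
    rw [hfind, hcompk]
    simp [OscAux.vF, show j ≠ n by omega]
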